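/- If z ∈ End(V^{⊗n}) is R-symmetric for an invertible R satisfying the Yang–Baxter equation, and Ω ∈ End(V^{⊗n}) is invertible with R_{i,i+1} Ω = τ_{i,i+1}(Ω) R̃_{i,i+1} for all 1 ≤ i < n (where R̃ = τ(F)⁻¹ R F for some invertible F), then Ω⁻¹ z Ω is R̃-symmetric: R̃_{i,i+1} (Ω⁻¹ z Ω) = τ_{i,i+1}(Ω⁻¹ z Ω) R̃_{i,i+1} for all 1 ≤ i < n. -/
import Mathlib


open TensorProduct

noncomputable section
universe u
variable (k V : Type u) [Field k] [AddCommGroup V] [Module k V]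

/-- The iterated tensor power `V^{⊗n}` (with `V^{⊗0} = k`), bundled as a module. -/
def TPow : ℕ → ModuleCat.{u} k
  | 0 => ModuleCat.of k k
  | n + 1 => ModuleCat.of k (V ⊗[k] (TPow n))

/-- The flip `P : V ⊗ V → V ⊗ V`. -/
def flipE : Module.End k (V ⊗[k] V) := (TensorProduct.comm k V V).toLinearMap

/-- `τ(X) = P X P` on `End(V ⊗ V)`. -/
def tauE (X : Module.End k (V ⊗[k] V)) : Module.End k (V ⊗[k] V) :=
  flipE k V * X * flipE k V

/-- The embedding of `X ∈ End(V ⊗ V)` into `End(V^{⊗n})` acting on the adjacent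
pair of tensor factors `(i+1, i+2)` (`i` is 0-based: `i = 0` gives `X₁₂`). -/
def adjLeg (X : Module.End k (V ⊗[k] V)) : (n i : ℕ) → Module.End k (TPow k V n)
  | 0, _ => 1
  | 1, _ => 1
  | (n + 2), 0 =>
      (TensorProduct.assoc k V V (TPow k V n)).toLinearMap ∘ₗ
        LinearMap.rTensor (TPow k V n) X ∘ₗ
        (TensorProduct.assoc k V V (TPow k V n)).symm.toLinearMap
  | (n + 2), (i + 1) => LinearMap.lTensor V (adjLeg X (n + 1) i)

theorem adjLeg_mul (X Y : Module.End k (V ⊗[k] V)) :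
    ∀ n i, adjLeg k V (X * Y) n i = adjLeg k V X n i * adjLeg k V Y n i
  | 0, _ => by simp [adjLeg]
  | 1, _ => by simp [adjLeg]
  | (n + 2), 0 => by
      show (TensorProduct.assoc k V V (TPow k V n)).toLinearMap ∘ₗ
        LinearMap.rTensor (TPow k V n) (X * Y) ∘ₗ
        (TensorProduct.assoc k V V (TPow k V n)).symm.toLinearMap = _
      show _ = ((TensorProduct.assoc k V V (TPow k V n)).toLinearMap ∘ₗ
        LinearMap.rTensor (TPow k V n) X ∘ₗ
        (TensorProduct.assoc k V V (TPow k V n)).symm.toLinearMap) ∘ₗ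
        ((TensorProduct.assoc k V V (TPow k V n)).toLinearMap ∘ₗ
        LinearMap.rTensor (TPow k V n) Y ∘ₗ
        (TensorProduct.assoc k V V (TPow k V n)).symm.toLinearMap)
      ext a b c
      simp [LinearMap.rTensor, Module.End.mul_apply]
  | (n + 2), (i + 1) => by
      show LinearMap.lTensor V (adjLeg k V (X * Y) (n + 1) i) = _
      rw [adjLeg_mul X Y (n + 1) i]
      show _ = LinearMap.lTensor V (adjLeg k V X (n + 1) i) ∘ₗ
        LinearMap.lTensor V (adjLeg k V Y (n + 1) i)
      rw [← LinearMap.lTensor_comp]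
      rfl

theorem adjLeg_one : ∀ n i, adjLeg k V 1 n i = (1 : Module.End k (TPow k V n))
  | 0, _ => rfl
  | 1, _ => rfl
  | (n + 2), 0 => by
      show (TensorProduct.assoc k V V (TPow k V n)).toLinearMap ∘ₗ
        LinearMap.rTensor (TPow k V n) 1 ∘ₗ
        (TensorProduct.assoc k V V (TPow k V n)).symm.toLinearMap = 1
      ext a b c
      simp [LinearMap.rTensor]
  | (n + 2), (i + 1) => by
      show LinearMap.lTensor V (adjLeg k V 1 (n + 1) i) = 1
      rw [adjLeg_one (n + 1) i]
      ext a b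
      simp

theorem flipE_sq : flipE k V * flipE k V = 1 := by
  ext a b
  simp [flipE, Module.End.mul_apply]

/-- if `z ∈ End(V^{⊗n})` is `R`-symmetric for an invertible solution
`R` of YBE, and the invertible `Ω` intertwines the `R`- and `R̃`-braid relations
(`R̃ = τ(F)⁻¹ R F`), then `Ω⁻¹ z Ω` is `R̃`-symmetric. -/
theorem conj_rSym [FiniteDimensional k V]
    (R R' F F' : Module.End k (V ⊗[k] V))
    (hR : R * R' = 1) (hR' : R' * R = 1)
    (hF : F * F' = 1) (hF' : F' * F = 1)
    (hYB : adjLeg k V R 3 0 *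
        (adjLeg k V (flipE k V) 3 1 * adjLeg k V R 3 0 * adjLeg k V (flipE k V) 3 1) *
        adjLeg k V R 3 1 =
      adjLeg k V R 3 1 *
        (adjLeg k V (flipE k V) 3 1 * adjLeg k V R 3 0 * adjLeg k V (flipE k V) 3 1) *
        adjLeg k V R 3 0)
    (n : ℕ)
    (z Ω Ωinv : Module.End k (TPow k V n))
    (hΩ : Ω * Ωinv = 1) (hΩ2 : Ωinv * Ω = 1)
    (hz : ∀ i : ℕ, i + 2 ≤ n →
      adjLeg k V R n i * z =
        (adjLeg k V (flipE k V) n i * z * adjLeg k V (flipE k V) n i) * adjLeg k V R n i)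
    (hint : ∀ i : ℕ, i + 2 ≤ n →
      adjLeg k V R n i * Ω =
        (adjLeg k V (flipE k V) n i * Ω * adjLeg k V (flipE k V) n i) *
          adjLeg k V (tauE k V F' * R * F) n i) :
    ∀ i : ℕ, i + 2 ≤ n →
      adjLeg k V (tauE k V F' * R * F) n i * (Ωinv * z * Ω) =
        (adjLeg k V (flipE k V) n i * (Ωinv * z * Ω) * adjLeg k V (flipE k V) n i) *
          adjLeg k V (tauE k V F' * R * F) n i := by
  intro i hi
  set P := adjLeg k V (flipE k V) n i with hPdef
  set A := adjLeg k V R n i with hAdef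
  set T := adjLeg k V (tauE k V F' * R * F) n i with hTdef
  have hP : P * P = 1 := by
    rw [hPdef, ← adjLeg_mul, flipE_sq, adjLeg_one]
  have key : P * Ωinv * P * (A * Ω) = T := by
    rw [hint i hi]
    calc P * Ωinv * P * (P * Ω * P * T)
        = P * (Ωinv * ((P * P) * Ω)) * P * T := by noncomm_ring
      _ = P * (Ωinv * Ω) * P * T := by rw [hP, one_mul]
      _ = (P * P) * T := by rw [hΩ2, mul_one]
      _ = T := by rw [hP, one_mul]
  rw [← key]
  calc P * Ωinv * P * (A * Ω) * (Ωinv * z * Ω)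
      = P * Ωinv * P * (A * ((Ω * Ωinv) * z)) * Ω := by noncomm_ring
    _ = P * Ωinv * P * (A * z) * Ω := by rw [hΩ, one_mul]
    _ = P * Ωinv * P * (P * z * P * A) * Ω := by rw [hz i hi]
    _ = P * (Ωinv * ((P * P) * z)) * P * (A * Ω) := by noncomm_ring
    _ = P * (Ωinv * z) * P * (A * Ω) := by rw [hP, one_mul]
    _ = P * (Ωinv * z) * P * (P * Ω * P * T) := by rw [hint i hi]
    _ = P * (Ωinv * z) * ((P * P) * Ω) * (P * T) := by noncomm_ring
    _ = P * (Ωinv * z * Ω) * P * T := by rw [hP, one_mul]; noncomm_ring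
    _ = P * (Ωinv * z * Ω) * P * (P * Ωinv * P * (A * Ω)) := by rw [key]
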